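/- Let E₀ : ℚ² × ℚ² → ℚ be the standard symplectic form (E₀(e₁,e₂) = 1 = -E₀(e₂,e₁), E₀(eᵢ,eᵢ) = 0), and define the alternating bilinear form E on ℚ⁴ = ℚ² × ℚ² by E((z₁,z₂),(w₁,w₂)) = 2·E₀(z₁,w₁) + 2·E₀(z₂,w₂) - E₀(z₁,w₂) - E₀(z₂,w₁). Then the dual lattice {v ∈ ℚ⁴ : E(v,λ) ∈ ℤ for all λ ∈ ℤ⁴} equals ℤ⁴ + {(x,-x) : x ∈ (1/3)ℤ²}, and its quotient by ℤ⁴ is isomorphic as an abelian group to ℤ/3ℤ × ℤ/3ℤ. -/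

import Mathlib

noncomputable section

/-- The standard symplectic form on ℚ². -/
def stdSymp (z w : Fin 2 → ℚ) : ℚ := z 0 * w 1 - z 1 * w 0

/-- The alternating form E on ℚ⁴ = ℚ² × ℚ² given by
E((z₁,z₂),(w₁,w₂)) = 2E₀(z₁,w₁) + 2E₀(z₂,w₂) - E₀(z₁,w₂) - E₀(z₂,w₁). -/
def polForm (z w : (Fin 2 → ℚ) × (Fin 2 → ℚ)) : ℚ :=
  2 * stdSymp z.1 w.1 + 2 * stdSymp z.2 w.2 - stdSymp z.1 w.2 - stdSymp z.2 w.1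

/-- Inclusion of integer vectors into ℚ². -/
def intVec (m : Fin 2 → ℤ) : Fin 2 → ℚ := fun i => (m i : ℚ)

/-- The dual lattice of ℤ⁴ with respect to E:
all v with E(v,λ) ∈ ℤ for every λ ∈ ℤ⁴ = ℤ² × ℤ². -/
def dualLattice : Set ((Fin 2 → ℚ) × (Fin 2 → ℚ)) :=
  {v | ∀ m : (Fin 2 → ℤ) × (Fin 2 → ℤ),
    ∃ n : ℤ, polForm v (intVec m.1, intVec m.2) = (n : ℚ)}

/-- The set ℤ⁴ + {(x,-x) : x ∈ (1/3)ℤ²} in ℚ² × ℚ². -/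
def dualSet : Set ((Fin 2 → ℚ) × (Fin 2 → ℚ)) :=
  {v | ∃ (m : (Fin 2 → ℤ) × (Fin 2 → ℤ)) (x : Fin 2 → ℤ),
    v = (intVec m.1 + (1 / 3 : ℚ) • intVec x, intVec m.2 - (1 / 3 : ℚ) • intVec x)}

/-- The dual lattice as a ℤ-submodule of ℚ² × ℚ². -/
def dualL : Submodule ℤ ((Fin 2 → ℚ) × (Fin 2 → ℚ)) := Submodule.span ℤ dualSet

/-- The standard lattice ℤ⁴ = ℤ² × ℤ² as a ℤ-submodule of ℚ² × ℚ². -/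
def stdL : Submodule ℤ ((Fin 2 → ℚ) × (Fin 2 → ℚ)) :=
  Submodule.span ℤ {v | ∃ m : (Fin 2 → ℤ) × (Fin 2 → ℤ), v = (intVec m.1, intVec m.2)}

/-! ### Auxiliary lemmas -/

lemma dualSet_subset : dualSet ⊆ dualLattice := by
  rintro v ⟨m, x, rfl⟩ w
  refine ⟨2*(m.1 0 * w.1 1 - m.1 1 * w.1 0) + 2*(m.2 0 * w.2 1 - m.2 1 * w.2 0)
    - (m.1 0 * w.2 1 - m.1 1 * w.2 0) - (m.2 0 * w.1 1 - m.2 1 * w.1 0)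
    + (x 0 * w.1 1 - x 1 * w.1 0) - (x 0 * w.2 1 - x 1 * w.2 0), ?_⟩
  simp only [polForm, stdSymp, intVec, Prod.fst, Prod.snd, Pi.add_apply, Pi.sub_apply,
    Pi.smul_apply, smul_eq_mul]
  push_cast
  ring

lemma lattice_subset : dualLattice ⊆ dualSet := by
  intro v hv
  obtain ⟨n1, h1⟩ := hv (![1,0], ![0,0])
  obtain ⟨n2, h2⟩ := hv (![0,1], ![0,0])
  obtain ⟨n3, h3⟩ := hv (![0,0], ![1,0])
  obtain ⟨n4, h4⟩ := hv (![0,0], ![0,1])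
  simp [polForm, stdSymp, intVec] at h1 h2 h3 h4
  refine ⟨(0, (![n2+n4, -(n1+n3)] : Fin 2 → ℤ)), ![2*n2+n4, -(2*n1+n3)], ?_⟩
  have hv' : v = (v.1, v.2) := rfl
  rw [hv']
  refine Prod.ext ?_ ?_ <;> funext i <;> fin_cases i <;>
    simp [intVec] <;> push_cast <;> linarith

/-- `dualSet` is itself a ℤ-submodule. -/
def Ssub : Submodule ℤ ((Fin 2 → ℚ) × (Fin 2 → ℚ)) where
  carrier := dualSet
  zero_mem' := ⟨(0, 0), 0, by ext i <;> simp [intVec]⟩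
  add_mem' := by
    rintro a b ⟨m, x, rfl⟩ ⟨m', x', rfl⟩
    refine ⟨(m.1 + m'.1, m.2 + m'.2), x + x', ?_⟩
    ext i <;> simp [intVec] <;> push_cast <;> ring
  smul_mem' := by
    rintro n a ⟨m, x, rfl⟩
    refine ⟨(n • m.1, n • m.2), n • x, ?_⟩
    ext i <;> simp [intVec] <;> push_cast <;> ring

/-- The standard-lattice set is itself a ℤ-submodule. -/
def Tsub : Submodule ℤ ((Fin 2 → ℚ) × (Fin 2 → ℚ)) where
  carrier := {v | ∃ m : (Fin 2 → ℤ) × (Fin 2 → ℤ), v = (intVec m.1, intVec m.2)}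
  zero_mem' := ⟨(0, 0), by ext i <;> simp [intVec]⟩
  add_mem' := by
    rintro a b ⟨m, rfl⟩ ⟨m', rfl⟩
    exact ⟨(m.1 + m'.1, m.2 + m'.2), by ext i <;> simp [intVec]⟩
  smul_mem' := by
    rintro n a ⟨m, rfl⟩
    exact ⟨(n • m.1, n • m.2), by ext i <;> simp [intVec] <;> push_cast <;> ring⟩

lemma dualL_eq : dualL = Ssub := Submodule.span_eq Ssub
lemma stdL_eq : stdL = Tsub := Submodule.span_eq Tsub

lemma exist3 {v : (Fin 2 → ℚ) × (Fin 2 → ℚ)} (hv : v ∈ dualL) (i : Fin 2) :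
    ∃ a : ℤ, 3 * v.1 i = (a : ℚ) := by
  rw [dualL_eq] at hv
  obtain ⟨m, x, rfl⟩ := hv
  exact ⟨3 * m.1 i + x i, by simp [intVec]; push_cast; ring⟩

lemma num_cast_add (q r : ℚ) (a b : ℤ) (hq : q = a) (hr : r = b) :
    (((q + r).num : ℤ) : ZMod 3) = ((q.num : ℤ) : ZMod 3) + ((r.num : ℤ) : ZMod 3) := by
  subst hq; subst hr
  rw [← Int.cast_add, Rat.num_intCast, Rat.num_intCast, Rat.num_intCast]
  push_cast; ring

/-- The reduction map `dualL → ℤ/3 × ℤ/3`, `v ↦ 3·v₁ mod 3`. -/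
def toZ3 : ↥dualL →+ ZMod 3 × ZMod 3 where
  toFun v := (((3 * v.1.1 0).num : ZMod 3), ((3 * v.1.1 1).num : ZMod 3))
  map_zero' := by simp
  map_add' v w := by
    have key : ∀ i, (3 : ℚ) * (↑(v + w) : (Fin 2 → ℚ) × (Fin 2 → ℚ)).1 i
        = 3 * (↑v : (Fin 2 → ℚ) × (Fin 2 → ℚ)).1 i
          + 3 * (↑w : (Fin 2 → ℚ) × (Fin 2 → ℚ)).1 i := by
      intro i
      simp only [Submodule.coe_add, Prod.fst_add, Pi.add_apply]
      ring
    obtain ⟨a0, ha0⟩ := exist3 v.2 0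
    obtain ⟨a1, ha1⟩ := exist3 v.2 1
    obtain ⟨b0, hb0⟩ := exist3 w.2 0
    obtain ⟨b1, hb1⟩ := exist3 w.2 1
    refine Prod.ext ?_ ?_ <;> simp only [Prod.fst_add, Prod.snd_add]
    · rw [key 0, num_cast_add _ _ _ _ ha0 hb0]
    · rw [key 1, num_cast_add _ _ _ _ ha1 hb1]

lemma toZ3_apply (v : ↥dualL) :
    toZ3 v = ((((3 * (↑v : (Fin 2 → ℚ) × (Fin 2 → ℚ)).1 0).num : ℤ) : ZMod 3),
              (((3 * (↑v : (Fin 2 → ℚ) × (Fin 2 → ℚ)).1 1).num : ℤ) : ZMod 3)) := rfl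

def F : ↥dualL →ₗ[ℤ] ZMod 3 × ZMod 3 := toZ3.toIntLinearMap

lemma toZ3_surjective : Function.Surjective toZ3 := by
  rintro ⟨s, t⟩
  set x : Fin 2 → ℤ := ![(s.val : ℤ), (t.val : ℤ)] with hx
  have hmem : (((1/3 : ℚ) • intVec x, -((1/3 : ℚ) • intVec x))
      : (Fin 2 → ℚ) × (Fin 2 → ℚ)) ∈ dualL := by
    rw [dualL_eq]
    exact ⟨(0, 0), x, by ext i <;> simp [intVec] <;> ring⟩
  refine ⟨⟨_, hmem⟩, ?_⟩
  rw [toZ3_apply]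
  have key : ∀ i, (3:ℚ) * ((1/3 : ℚ) • intVec x) i = ((x i : ℤ) : ℚ) := by
    intro i
    simp only [Pi.smul_apply, smul_eq_mul, intVec]
    ring
  refine Prod.ext ?_ ?_
  · show (((3 * ((1/3 : ℚ) • intVec x) 0).num : ℤ) : ZMod 3) = s
    rw [key 0, Rat.num_intCast]
    simp [hx, ZMod.natCast_val, ZMod.cast_id]
  · show (((3 * ((1/3 : ℚ) • intVec x) 1).num : ℤ) : ZMod 3) = t
    rw [key 1, Rat.num_intCast]
    simp [hx, ZMod.natCast_val, ZMod.cast_id]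

lemma mem_of_dualL {u : (Fin 2 → ℚ) × (Fin 2 → ℚ)} (h : u ∈ dualL) :
    ∃ (m : (Fin 2 → ℤ) × (Fin 2 → ℤ)) (x : Fin 2 → ℤ),
      u = (intVec m.1 + (1 / 3 : ℚ) • intVec x, intVec m.2 - (1 / 3 : ℚ) • intVec x) := by
  rw [dualL_eq] at h; exact h

lemma mem_stdL_iff {u : (Fin 2 → ℚ) × (Fin 2 → ℚ)} :
    u ∈ stdL ↔ ∃ m : (Fin 2 → ℤ) × (Fin 2 → ℤ), u = (intVec m.1, intVec m.2) := by
  rw [stdL_eq]; exact Iff.rfl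

lemma ker_eq : LinearMap.ker F = stdL.comap dualL.subtype := by
  ext v
  simp only [LinearMap.mem_ker, Submodule.mem_comap, Submodule.subtype_apply]
  have hFv : F v = toZ3 v := rfl
  constructor
  · intro h
    rw [hFv, toZ3_apply] at h
    obtain ⟨m, x, hrep⟩ := mem_of_dualL v.2
    have h0 : (((3 * (↑v : (Fin 2 → ℚ) × (Fin 2 → ℚ)).1 0).num : ℤ) : ZMod 3) = 0 :=
      congrArg Prod.fst h
    have h1 : (((3 * (↑v : (Fin 2 → ℚ) × (Fin 2 → ℚ)).1 1).num : ℤ) : ZMod 3) = 0 :=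
      congrArg Prod.snd h
    have key : ∀ i, (3:ℚ) * (↑v : (Fin 2 → ℚ) × (Fin 2 → ℚ)).1 i
        = ((3 * m.1 i + x i : ℤ) : ℚ) := by
      intro i; rw [hrep]; simp [intVec] <;> push_cast <;> ring
    rw [key 0, Rat.num_intCast] at h0
    rw [key 1, Rat.num_intCast] at h1
    have d0 : (3:ℤ) ∣ x 0 := by
      have := (ZMod.intCast_zmod_eq_zero_iff_dvd _ 3).1 h0; omega
    have d1 : (3:ℤ) ∣ x 1 := by
      have := (ZMod.intCast_zmod_eq_zero_iff_dvd _ 3).1 h1; omega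
    obtain ⟨k0, hk0⟩ := d0
    obtain ⟨k1, hk1⟩ := d1
    rw [mem_stdL_iff]
    refine ⟨(m.1 + ![k0, k1], m.2 - ![k0, k1]), ?_⟩
    have c0 : (x 0 : ℚ) = 3 * (k0 : ℚ) := by exact_mod_cast congrArg (Int.cast : ℤ → ℚ) hk0
    have c1 : (x 1 : ℚ) = 3 * (k1 : ℚ) := by exact_mod_cast congrArg (Int.cast : ℤ → ℚ) hk1
    rw [hrep]
    refine Prod.ext ?_ ?_ <;> funext i <;> fin_cases i <;>
      simp [intVec] <;> push_cast <;> linarith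
  · intro h
    obtain ⟨m, hm⟩ := mem_stdL_iff.1 h
    have key : ∀ i, (3:ℚ) * (↑v : (Fin 2 → ℚ) × (Fin 2 → ℚ)).1 i = ((3 * m.1 i : ℤ) : ℚ) := by
      intro i; rw [hm]; simp [intVec] <;> push_cast <;> ring
    rw [hFv, toZ3_apply, key 0, key 1, Rat.num_intCast, Rat.num_intCast]
    refine Prod.ext ?_ ?_ <;>
      exact (ZMod.intCast_zmod_eq_zero_iff_dvd _ 3).2 (dvd_mul_right 3 _)

/-- The quotient of the dual lattice by ℤ⁴ is ℤ/3 × ℤ/3. -/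
def quotEquiv : (↥dualL ⧸ (stdL.comap dualL.subtype)) ≃ₗ[ℤ] ZMod 3 × ZMod 3 := by
  refine LinearEquiv.ofBijective
    (Submodule.liftQ (stdL.comap dualL.subtype) F (le_of_eq ker_eq.symm)) ⟨?_, ?_⟩
  · rw [← LinearMap.ker_eq_bot, Submodule.ker_liftQ_eq_bot]
    exact le_of_eq ker_eq
  · intro y
    obtain ⟨v, hv⟩ := toZ3_surjective y
    exact ⟨Submodule.Quotient.mk v, hv⟩

/-- the dual lattice of ℤ⁴ with respect to E equals
ℤ⁴ + {(x,-x) : x ∈ (1/3)ℤ²}, and its quotient by ℤ⁴ is isomorphic to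
ℤ/3ℤ × ℤ/3ℤ. -/
theorem stmt7 :
    dualLattice = dualSet ∧
    Nonempty ((↥dualL ⧸ (stdL.comap dualL.subtype)) ≃+ (ZMod 3 × ZMod 3)) := by
  exact ⟨Set.Subset.antisymm lattice_subset dualSet_subset, ⟨quotEquiv.toAddEquiv⟩⟩

end
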